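/- Let P be a polynomial with real coefficients of degree at most d, written P(x) = ∑_{k=0}^d c_k·binom(x,k), and define g(z) = (1/(1−z))·∑_{k=0}^d c_k·(z/(1−z))^k for z ∈ ℂ \ {1}. Then for every real r with 0 < r < 1: (1/(2π))·∫₀^{2π} |g(r·e^{iθ})|² dθ = ∑_{n=0}^∞ |P(n)|²·r^{2n}, and for every real r > 1: (1/(2π))·∫₀^{2π} |g(r·e^{iθ})|² dθ = ∑_{n=1}^∞ |P(−n)|²·r^{−2n}. -/

import Mathlib

/-- The binomial polynomial `binom(x,k) = x(x-1)⋯(x-k+1)/k!`. -/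
noncomputable def binom (x : ℝ) (k : ℕ) : ℝ :=
  (∏ i ∈ Finset.range k, (x - i)) / (Nat.factorial k)

/-- The polynomial `P_c(x) = ∑_{k=0}^d c_k · binom(x,k)`. -/
noncomputable def Pc {d : ℕ} (c : Fin (d + 1) → ℝ) (x : ℝ) : ℝ :=
  ∑ k : Fin (d + 1), c k * binom x (k : ℕ)



lemma binom_natCast (n k : ℕ) : binom (n : ℝ) k = (n.choose k : ℝ) := by
  unfold binom
  rcases le_or_gt k n with h | h
  · have hp : ∏ i ∈ Finset.range k, ((n : ℝ) - i) = (n.descFactorial k : ℝ) := by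
      rw [Nat.descFactorial_eq_prod_range, Nat.cast_prod]
      refine Finset.prod_congr rfl fun i hi => ?_
      rw [Nat.cast_sub ((Finset.mem_range.mp hi).le.trans h)]
    rw [hp, Nat.descFactorial_eq_factorial_mul_choose]
    push_cast
    have f0 : (k.factorial:ℝ) ≠ 0 := by exact_mod_cast Nat.factorial_ne_zero k
    field_simp
  · rw [Finset.prod_eq_zero (Finset.mem_range.mpr h) (by simp), Nat.choose_eq_zero_of_lt h]
    simp

lemma binom_neg (n k : ℕ) :
    binom (-((n : ℝ) + 1)) k = (-1) ^ k * ((n + k).choose k : ℝ) := by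
  unfold binom
  have h1 : ∏ i ∈ Finset.range k, (-((n : ℝ) + 1) - i)
      = (-1) ^ k * ∏ i ∈ Finset.range k, ((n : ℝ) + 1 + i) := by
    rw [← Finset.prod_mul_distrib.symm.trans (Finset.prod_congr rfl fun i (_ : i ∈ Finset.range k) => (by ring : (-1:ℝ) * ((n:ℝ)+1+i) = -((n:ℝ)+1) - i))]
    rw [Finset.prod_const, Finset.card_range]
  have h2 : ∀ m : ℕ, ∏ i ∈ Finset.range m, ((n : ℝ) + 1 + i)
      = ((n + m).choose m : ℝ) * (m.factorial : ℝ) := by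
    intro m
    induction m with
    | zero => simp
    | succ m ih =>
        rw [Finset.prod_range_succ, ih]
        rw [Nat.cast_choose ℝ (by omega : m ≤ n + m), Nat.cast_choose ℝ (by omega : m + 1 ≤ n + (m + 1))]
        have e1 : n + m - m = n := by omega
        have e2 : n + (m + 1) - (m + 1) = n := by omega
        rw [e1, e2]
        have e3 : n + (m + 1) = (n + m) + 1 := by omega
        rw [e3, Nat.factorial_succ (n + m), Nat.factorial_succ m]
        have f1 : ((n + m).factorial : ℝ) ≠ 0 := by exact_mod_cast (n + m).factorial_ne_zero
        have f2 : (m.factorial : ℝ) ≠ 0 := by exact_mod_cast m.factorial_ne_zero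
        have f3 : (n.factorial : ℝ) ≠ 0 := by exact_mod_cast n.factorial_ne_zero
        push_cast
        field_simp
        ring
  rw [h1, h2 k, mul_div_assoc, mul_div_assoc,
    div_self (by exact_mod_cast Nat.factorial_ne_zero k : (k.factorial:ℝ) ≠ 0), mul_one]

lemma Pc_natCast {d : ℕ} (c : Fin (d + 1) → ℝ) (n : ℕ) :
    Pc c (n : ℝ) = ∑ k : Fin (d + 1), c k * (n.choose (k : ℕ) : ℝ) := by
  unfold Pc; exact Finset.sum_congr rfl fun k _ => by rw [binom_natCast]

lemma Pc_neg {d : ℕ} (c : Fin (d + 1) → ℝ) (n : ℕ) :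
    Pc c (-((n : ℝ) + 1)) = ∑ k : Fin (d + 1), c k * ((-1) ^ (k : ℕ) * ((n + (k : ℕ)).choose (k : ℕ) : ℝ)) := by
  unfold Pc; exact Finset.sum_congr rfl fun k _ => by rw [binom_neg]


open MeasureTheory Complex
open scoped NNReal ENNReal

lemma integral_exp_int (m : ℤ) :
    (∫ θ in (0:ℝ)..(2*Real.pi), Complex.exp ((m:ℂ) * θ * Complex.I))
      = if m = 0 then (2*Real.pi : ℂ) else 0 := by
  split_ifs with h
  · subst h
    simp
  · have hc : (m:ℂ) * Complex.I ≠ 0 :=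
      mul_ne_zero (by exact_mod_cast h) Complex.I_ne_zero
    have hrw : ∀ θ : ℝ, (m:ℂ) * θ * Complex.I = ((m:ℂ) * Complex.I) * θ := fun θ => by ring
    simp_rw [hrw]
    rw [integral_exp_mul_complex hc, div_eq_zero_iff]
    left
    rw [Complex.ofReal_zero, mul_zero, Complex.exp_zero]
    rw [show ((m:ℂ) * Complex.I * ((2*Real.pi : ℝ):ℂ)) = (m:ℂ) * (2 * Real.pi * Complex.I) by
      push_cast; ring]
    rw [Complex.exp_int_mul_two_pi_mul_I m]
    ring

lemma parseval_aux (a : ℕ → ℂ) (ha : Summable fun n => ‖a n‖) (e : ℕ → ℤ)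
    (he : Function.Injective e) (f : ℝ → ℂ)
    (hf : ∀ θ : ℝ, HasSum (fun n => a n * Complex.exp ((e n : ℂ) * θ * Complex.I)) (f θ)) :
    ∫ θ in (0:ℝ)..(2*Real.pi), ‖f θ‖ ^ 2 = 2*Real.pi * ∑' n, ‖a n‖^2 := by
  have hπ : (0:ℝ) ≤ 2*Real.pi := by positivity
  set T : ℕ×ℕ → ℝ → ℂ := fun p θ =>
    (a p.1 * (starRingEnd ℂ) (a p.2)) *
      Complex.exp (((e p.1 - e p.2 : ℤ) : ℂ) * θ * Complex.I) with hT
  have hnorm1 : ∀ (m : ℤ) (θ : ℝ), ‖Complex.exp ((m:ℂ) * θ * Complex.I)‖ = 1 := by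
    intro m θ
    rw [Complex.norm_exp]
    simp [Complex.mul_re]
  have hTc : ∀ p, Continuous (T p) := by
    intro p
    exact continuous_const.mul (Complex.continuous_exp.comp
      ((continuous_const.mul Complex.continuous_ofReal).mul continuous_const))
  have hTnorm : ∀ p θ, ‖T p θ‖ = ‖a p.1‖ * ‖a p.2‖ := by
    intro p θ
    rw [hT]
    simp only [norm_mul, hnorm1, mul_one, RCLike.norm_conj]
  have hprodsum : Summable (fun p : ℕ×ℕ => ‖a p.1‖ * ‖a p.2‖) := by
    have := ha.mul_norm ha
    simpa [norm_mul] using this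
  -- pointwise expansion of |f θ|²
  have hpt : ∀ θ : ℝ, ‖f θ‖ ^ 2 = ∑' p : ℕ×ℕ, (T p θ).re := by
    intro θ
    have h1 := hf θ
    have hconj : HasSum (fun m => (starRingEnd ℂ) (a m * Complex.exp ((e m : ℂ) * θ * Complex.I)))
        ((starRingEnd ℂ) (f θ)) :=
      h1.map (starRingEnd ℂ).toAddMonoidHom continuous_conj
    have hs1 : Summable fun n => ‖a n * Complex.exp ((e n : ℂ) * θ * Complex.I)‖ := by
      simpa [norm_mul, hnorm1] using ha
    have hs2 : Summable fun n => ‖(starRingEnd ℂ) (a n * Complex.exp ((e n : ℂ) * θ * Complex.I))‖ := by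
      simpa [RCLike.norm_conj] using hs1
    have hmul : f θ * (starRingEnd ℂ) (f θ)
        = ∑' p : ℕ×ℕ, (a p.1 * Complex.exp ((e p.1 : ℂ) * θ * Complex.I)) *
            (starRingEnd ℂ) (a p.2 * Complex.exp ((e p.2 : ℂ) * θ * Complex.I)) := by
      rw [← hconj.tsum_eq, ← h1.tsum_eq]
      exact tsum_mul_tsum_of_summable_norm hs1 hs2
    have hterm : ∀ p : ℕ×ℕ,
        (a p.1 * Complex.exp ((e p.1 : ℂ) * θ * Complex.I)) *
          (starRingEnd ℂ) (a p.2 * Complex.exp ((e p.2 : ℂ) * θ * Complex.I)) = T p θ := by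
      intro p
      rw [hT, map_mul, ← Complex.exp_conj]
      have hc : (starRingEnd ℂ) ((e p.2 : ℂ) * θ * Complex.I) = -((e p.2 : ℂ) * θ * Complex.I) := by
        simp [map_mul, Complex.conj_I, Complex.conj_ofReal]
      rw [hc]
      rw [show (a p.1 * Complex.exp ((e p.1 : ℂ) * θ * Complex.I)) *
          ((starRingEnd ℂ) (a p.2) * Complex.exp (-((e p.2 : ℂ) * θ * Complex.I)))
        = (a p.1 * (starRingEnd ℂ) (a p.2)) *
          (Complex.exp ((e p.1 : ℂ) * θ * Complex.I) * Complex.exp (-((e p.2 : ℂ) * θ * Complex.I))) by ring]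
      rw [← Complex.exp_add]
      congr 2
      push_cast
      ring
    have habs : ‖f θ‖ ^ 2 = (f θ * (starRingEnd ℂ) (f θ)).re := by
      rw [Complex.mul_conj, Complex.sq_norm]
      simp
    rw [habs, hmul]
    rw [Complex.re_tsum (summable_mul_of_summable_norm hs1 hs2)]
    exact tsum_congr fun p => by rw [hterm p]
  -- swap integral and sum
  rw [intervalIntegral.integral_of_le hπ]
  have hmeas : ∀ p : ℕ×ℕ, AEStronglyMeasurable (fun θ => (T p θ).re)
      (volume.restrict (Set.Ioc 0 (2*Real.pi))) :=
    fun p => (Complex.continuous_re.comp (hTc p)).aestronglyMeasurable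
  have hbound : ∀ p : ℕ×ℕ, ∫⁻ θ in Set.Ioc 0 (2*Real.pi), ‖(T p θ).re‖₊
      ≤ (‖a p.1‖₊ * ‖a p.2‖₊ : ℝ≥0) * volume (Set.Ioc (0:ℝ) (2*Real.pi)) := by
    intro p
    calc ∫⁻ θ in Set.Ioc 0 (2*Real.pi), (‖(T p θ).re‖₊ : ENNReal)
        ≤ ∫⁻ _ in Set.Ioc 0 (2*Real.pi), ((‖a p.1‖₊ * ‖a p.2‖₊ : ℝ≥0) : ENNReal) := by
          apply lintegral_mono
          intro θ
          have h2 : ‖(T p θ).re‖ ≤ ‖a p.1‖ * ‖a p.2‖ := by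
            rw [← hTnorm p θ]
            exact Complex.abs_re_le_norm (T p θ)
          have h3 : ‖(T p θ).re‖₊ ≤ ‖a p.1‖₊ * ‖a p.2‖₊ := by
            rw [← NNReal.coe_le_coe]; push_cast; exact h2
          exact ENNReal.coe_le_coe.2 h3
      _ = (‖a p.1‖₊ * ‖a p.2‖₊ : ℝ≥0) * volume (Set.Ioc (0:ℝ) (2*Real.pi)) := by
          rw [setLIntegral_const]
  have hfin : ∑' p : ℕ×ℕ, ∫⁻ θ in Set.Ioc 0 (2*Real.pi), (‖(T p θ).re‖₊ : ENNReal) ≠ ⊤ := by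
    apply ne_top_of_le_ne_top _ (ENNReal.tsum_le_tsum hbound)
    rw [ENNReal.tsum_mul_right]
    apply ENNReal.mul_ne_top
    · apply ENNReal.tsum_coe_ne_top_iff_summable.2
      rw [← NNReal.summable_coe]
      simpa [NNReal.coe_mul] using hprodsum
    · exact (measure_Ioc_lt_top).ne
  have hswap := integral_tsum hmeas hfin
  calc ∫ θ in Set.Ioc 0 (2*Real.pi), ‖f θ‖ ^ 2
      = ∫ θ in Set.Ioc 0 (2*Real.pi), ∑' p : ℕ×ℕ, (T p θ).re := by
        exact integral_congr_ae (Filter.Eventually.of_forall fun θ => hpt θ)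
    _ = ∑' p : ℕ×ℕ, ∫ θ in Set.Ioc 0 (2*Real.pi), (T p θ).re := hswap
    _ = ∑' p : ℕ×ℕ, (if p.1 = p.2 then 2*Real.pi * ‖a p.1‖^2 else 0) := by
        refine tsum_congr fun p => ?_
        have hTi : IntegrableOn (T p) (Set.Ioc 0 (2*Real.pi)) volume := (hTc p).integrableOn_Ioc
        have hre : ∫ θ in Set.Ioc 0 (2*Real.pi), (T p θ).re
            = (∫ θ in Set.Ioc 0 (2*Real.pi), T p θ).re := integral_re hTi
        rw [hre, ← intervalIntegral.integral_of_le hπ]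
        rw [hT]
        simp only
        rw [intervalIntegral.integral_const_mul, integral_exp_int (e p.1 - e p.2)]
        by_cases hp : p.1 = p.2
        · rw [if_pos hp, if_pos (by rw [hp]; ring), hp, Complex.mul_conj]
          simp only [Complex.mul_re, Complex.ofReal_re, Complex.ofReal_im, Complex.mul_im,
            Complex.re_ofNat, Complex.im_ofNat, Complex.normSq_eq_norm_sq]
          ring
        · rw [if_neg hp, if_neg (fun h => hp (he (sub_eq_zero.mp h)))]
          simp
    _ = ∑' n : ℕ, 2*Real.pi * ‖a n‖^2 := by
        have hS : Summable (fun p : ℕ×ℕ => if p.1 = p.2 then 2*Real.pi * ‖a p.1‖^2 else 0) := by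
          apply Summable.of_nonneg_of_le _ _ (hprodsum.mul_left (2*Real.pi))
          · intro p; split <;> positivity
          · intro p
            split
            · next h => rw [pow_two, ← h]
            · positivity
        rw [Summable.tsum_prod' hS (fun n => hS.prod_factor n)]
        refine tsum_congr fun n => ?_
        rw [tsum_eq_single n (fun m hm => if_neg (fun h => hm (h.symm)))]
        simp
    _ = 2*Real.pi * ∑' n : ℕ, ‖a n‖^2 := by rw [tsum_mul_left]

lemma hasSum_g_of_lt (d : ℕ) (c : Fin (d + 1) → ℝ) {z : ℂ} (hz : ‖z‖ < 1) :
    HasSum (fun n : ℕ => ((Pc c n : ℝ) : ℂ) * z ^ n)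
      ((1 / (1 - z)) * ∑ k : Fin (d + 1), (c k : ℂ) * (z / (1 - z)) ^ (k : ℕ)) := by
  have h1 : (1 : ℂ) - z ≠ 0 := by
    intro h
    rw [sub_eq_zero] at h
    rw [← h] at hz
    simp at hz
  have key : ∀ k : Fin (d + 1),
      HasSum (fun n : ℕ => (c k : ℂ) * (n.choose (k : ℕ) : ℂ) * z ^ n)
        ((c k : ℂ) * ((1 / (1 - z)) * (z / (1 - z)) ^ (k : ℕ))) := by
    intro k
    have h2 := hasSum_choose_mul_geometric_of_norm_lt_one (k : ℕ) hz
    have h3 := h2.mul_left ((c k : ℂ) * z ^ (k : ℕ))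
    have h4 : (fun n : ℕ => ((c k : ℂ) * z ^ (k : ℕ)) * (((n + (k : ℕ)).choose (k : ℕ) : ℂ) * z ^ n))
        = fun n : ℕ => (c k : ℂ) * (((n + (k : ℕ)).choose (k : ℕ) : ℂ)) * z ^ (n + (k : ℕ)) := by
      funext n; rw [pow_add]; ring
    rw [h4] at h3
    have h5 := (hasSum_nat_add_iff (f := fun n : ℕ => (c k : ℂ) * ((n.choose (k : ℕ) : ℂ)) * z ^ n) (k : ℕ)).mp h3
    have h6 : ∑ i ∈ Finset.range (k : ℕ), (c k : ℂ) * ((i.choose (k : ℕ) : ℂ)) * z ^ i = 0 := by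
      apply Finset.sum_eq_zero
      intro i hi
      rw [Nat.choose_eq_zero_of_lt (Finset.mem_range.mp hi)]
      simp
    rw [h6, add_zero] at h5
    convert h5 using 1
    · rfl
    have hv : (1 / (1 - z)) * (z / (1 - z)) ^ (k : ℕ) = z ^ (k : ℕ) * (1 / (1 - z) ^ ((k : ℕ) + 1)) := by
      rw [div_pow, pow_succ, one_div, one_div, mul_inv]
      ring
    rw [hv]
    ring
  have total := hasSum_sum (s := (Finset.univ : Finset (Fin (d + 1)))) (fun k _ => key k)
  have hfun : (fun n : ℕ => ∑ k : Fin (d + 1), (c k : ℂ) * (n.choose (k : ℕ) : ℂ) * z ^ n)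
      = fun n : ℕ => ((Pc c n : ℝ) : ℂ) * z ^ n := by
    funext n
    rw [Pc_natCast]
    push_cast
    rw [Finset.sum_mul]
  have hval : ∑ k : Fin (d + 1), (c k : ℂ) * ((1 / (1 - z)) * (z / (1 - z)) ^ (k : ℕ))
      = (1 / (1 - z)) * ∑ k : Fin (d + 1), (c k : ℂ) * (z / (1 - z)) ^ (k : ℕ) := by
    rw [Finset.mul_sum]
    exact Finset.sum_congr rfl fun k _ => by ring
  rw [hfun, hval] at total
  exact total

lemma hasSum_g_of_gt (d : ℕ) (c : Fin (d + 1) → ℝ) {z : ℂ} (hz : 1 < ‖z‖) :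
    HasSum (fun n : ℕ => -((Pc c (-((n : ℝ) + 1)) : ℝ) : ℂ) * (z⁻¹) ^ (n + 1))
      ((1 / (1 - z)) * ∑ k : Fin (d + 1), (c k : ℂ) * (z / (1 - z)) ^ (k : ℕ)) := by
  have hz0 : z ≠ 0 := by
    intro h; rw [h] at hz; norm_num at hz
  have hz1 : z ≠ 1 := by
    intro h; rw [h] at hz; norm_num at hz
  have h1z : (1 : ℂ) - z ≠ 0 := sub_ne_zero.mpr (fun h => hz1 h.symm)
  have hz1m : z - 1 ≠ 0 := sub_ne_zero.mpr hz1
  set w : ℂ := z⁻¹ with hw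
  have hwn : ‖w‖ < 1 := by
    rw [hw, norm_inv]
    rw [inv_lt_one_iff₀]
    right; exact hz
  have h1w : (1 : ℂ) - w ≠ 0 := by
    intro h; rw [sub_eq_zero] at h; rw [← h] at hwn; simp at hwn
  have hwz : (1 : ℂ) - w = (z - 1) / z := by
    rw [hw]; field_simp
  have e1 : z / (1 - z) = -(1 / (1 - w)) := by
    rw [hwz, one_div_div, show (1 : ℂ) - z = -(z - 1) by ring, div_neg]
  have e2 : 1 / (1 - z) = -(w / (1 - w)) := by
    rw [hwz, hw]
    have hq : z⁻¹ / ((z - 1) / z) = 1 / (z - 1) := by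
      field_simp
    rw [hq, show (1 : ℂ) - z = -(z - 1) by ring, div_neg]
  have key : ∀ k : Fin (d + 1),
      HasSum (fun n : ℕ => ((c k : ℂ) * (-1) ^ ((k : ℕ) + 1) * ((n + (k : ℕ)).choose (k : ℕ) : ℂ)) * w ^ (n + 1))
        ((c k : ℂ) * ((1 / (1 - z)) * (z / (1 - z)) ^ (k : ℕ))) := by
    intro k
    have h2 := hasSum_choose_mul_geometric_of_norm_lt_one (k : ℕ) hwn
    have h3 := h2.mul_left ((c k : ℂ) * (-1) ^ ((k : ℕ) + 1) * w)
    have h4 : (fun n : ℕ => ((c k : ℂ) * (-1) ^ ((k : ℕ) + 1) * w) * (((n + (k : ℕ)).choose (k : ℕ) : ℂ) * w ^ n))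
        = fun n : ℕ => ((c k : ℂ) * (-1) ^ ((k : ℕ) + 1) * ((n + (k : ℕ)).choose (k : ℕ) : ℂ)) * w ^ (n + 1) := by
      funext n; rw [pow_succ]; ring
    rw [h4] at h3
    convert h3 using 1
    · rfl
    rw [e1, e2, neg_pow,
      show (1 : ℂ) / (1 - w) ^ ((k : ℕ) + 1) = (1 / (1 - w)) ^ ((k : ℕ) + 1) by rw [div_pow, one_pow],
      pow_succ (1 / (1 - w)) (k : ℕ), pow_succ (-1 : ℂ) (k : ℕ),
      show w / (1 - w) = w * (1 / (1 - w)) by rw [mul_one_div]]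
    ring
  have total := hasSum_sum (s := (Finset.univ : Finset (Fin (d + 1)))) (fun k _ => key k)
  have hfun : (fun n : ℕ => ∑ k : Fin (d + 1), ((c k : ℂ) * (-1) ^ ((k : ℕ) + 1) * ((n + (k : ℕ)).choose (k : ℕ) : ℂ)) * w ^ (n + 1))
      = fun n : ℕ => -((Pc c (-((n : ℝ) + 1)) : ℝ) : ℂ) * w ^ (n + 1) := by
    funext n
    rw [Pc_neg]
    push_cast
    rw [← Finset.sum_neg_distrib, Finset.sum_mul]
    exact Finset.sum_congr rfl fun k _ => by ring
  have hval : ∑ k : Fin (d + 1), (c k : ℂ) * ((1 / (1 - z)) * (z / (1 - z)) ^ (k : ℕ))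
      = (1 / (1 - z)) * ∑ k : Fin (d + 1), (c k : ℂ) * (z / (1 - z)) ^ (k : ℕ) := by
    rw [Finset.mul_sum]
    exact Finset.sum_congr rfl fun k _ => by ring
  rw [hfun, hval] at total
  exact total


lemma abs_Pc_nat_le {d : ℕ} (c : Fin (d + 1) → ℝ) (n : ℕ) :
    |Pc c (n : ℝ)| ≤ ∑ k : Fin (d + 1), |c k| * (((n + (k : ℕ)).choose (k : ℕ) : ℝ)) := by
  rw [Pc_natCast]
  refine (Finset.abs_sum_le_sum_abs _ _).trans ?_
  apply Finset.sum_le_sum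
  intro k _
  rw [abs_mul, Nat.abs_cast]
  apply mul_le_mul_of_nonneg_left _ (abs_nonneg _)
  exact_mod_cast Nat.choose_le_choose (k : ℕ) (Nat.le_add_right n (k : ℕ))

lemma abs_Pc_neg_le {d : ℕ} (c : Fin (d + 1) → ℝ) (n : ℕ) :
    |Pc c (-((n : ℝ) + 1))| ≤ ∑ k : Fin (d + 1), |c k| * (((n + (k : ℕ)).choose (k : ℕ) : ℝ)) := by
  rw [Pc_neg]
  refine (Finset.abs_sum_le_sum_abs _ _).trans ?_
  apply Finset.sum_le_sum
  intro k _
  rw [abs_mul, abs_mul, _root_.abs_pow, abs_neg, abs_one, one_pow, one_mul, Nat.abs_cast]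

lemma summable_majorant {d : ℕ} (c : Fin (d + 1) → ℝ) {s : ℝ} (hs0 : 0 ≤ s) (hs1 : s < 1) :
    Summable (fun n : ℕ => (∑ k : Fin (d + 1), |c k| * (((n + (k : ℕ)).choose (k : ℕ) : ℝ))) * s ^ n) := by
  have hsn : ‖s‖ < 1 := by rwa [Real.norm_eq_abs, _root_.abs_of_nonneg hs0]
  have hk : ∀ k : Fin (d + 1),
      HasSum (fun n : ℕ => |c k| * (((n + (k : ℕ)).choose (k : ℕ) : ℝ)) * s ^ n)
        (|c k| * (1 / (1 - s) ^ ((k : ℕ) + 1))) := by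
    intro k
    have := (hasSum_choose_mul_geometric_of_norm_lt_one (k : ℕ) hsn).mul_left |c k|
    simpa [mul_assoc] using this
  have htot := hasSum_sum (s := (Finset.univ : Finset (Fin (d + 1)))) (fun k _ => hk k)
  apply htot.summable.congr
  intro n
  rw [Finset.sum_mul]


/-- Circle means of the (analytically continued) generating function
`g(z) = (1/(1-z)) ∑_k c_k (z/(1-z))^k`:
for `0 < r < 1` they recover `∑_{n≥0} P(n)² r^{2n}`, and for `r > 1` they
recover `∑_{n≥1} P(-n)² r^{-2n}`. -/
theorem stmt_10 (d : ℕ) (c : Fin (d + 1) → ℝ) (g : ℂ → ℂ)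
    (hg : ∀ z : ℂ, z ≠ 1 →
      g z = (1 / (1 - z)) * ∑ k : Fin (d + 1), (c k : ℂ) * (z / (1 - z)) ^ (k : ℕ)) :
    (∀ r : ℝ, 0 < r → r < 1 →
      (1 / (2 * Real.pi)) *
          ∫ θ in (0 : ℝ)..(2 * Real.pi),
            ‖g ((r : ℂ) * Complex.exp ((θ : ℂ) * Complex.I))‖ ^ 2
        = ∑' n : ℕ, (Pc c (n : ℝ)) ^ 2 * r ^ (2 * n)) ∧
    (∀ r : ℝ, 1 < r →
      (1 / (2 * Real.pi)) *
          ∫ θ in (0 : ℝ)..(2 * Real.pi),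
            ‖g ((r : ℂ) * Complex.exp ((θ : ℂ) * Complex.I))‖ ^ 2
        = ∑' n : ℕ, (Pc c (-((n : ℝ) + 1))) ^ 2 / r ^ (2 * (n + 1))) := by
  have hπ : (2 * Real.pi) ≠ 0 := by positivity
  have hznorm : ∀ (r θ : ℝ), 0 < r → ‖(r : ℂ) * Complex.exp ((θ : ℂ) * Complex.I)‖ = r := by
    intro r θ hr
    rw [norm_mul, Complex.norm_exp]
    simp [Complex.norm_real, abs_of_pos hr]
  constructor
  · intro r hr0 hr1
    set a : ℕ → ℂ := fun n => ((Pc c (n : ℝ) * r ^ n : ℝ) : ℂ) with haa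
    have hanorm : ∀ n, ‖a n‖ = |Pc c (n : ℝ)| * r ^ n := by
      intro n
      rw [haa]
      rw [Complex.norm_real, Real.norm_eq_abs, abs_mul, _root_.abs_pow, _root_.abs_of_pos hr0]
    have ha : Summable fun n => ‖a n‖ := by
      apply Summable.of_nonneg_of_le (fun n => norm_nonneg _)
        (fun n => ?_) (summable_majorant c hr0.le hr1)
      rw [hanorm]
      exact mul_le_mul_of_nonneg_right (abs_Pc_nat_le c n) (by positivity)
    have hf : ∀ θ : ℝ, HasSum (fun n : ℕ => a n * Complex.exp ((((n : ℤ) : ℂ)) * (θ : ℂ) * Complex.I))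
        (g ((r : ℂ) * Complex.exp ((θ : ℂ) * Complex.I))) := by
      intro θ
      have hzn : ‖(r : ℂ) * Complex.exp ((θ : ℂ) * Complex.I)‖ < 1 := by
        rw [hznorm r θ hr0]; exact hr1
      have hne : (r : ℂ) * Complex.exp ((θ : ℂ) * Complex.I) ≠ 1 := by
        intro h; rw [h] at hzn; simp at hzn
      have hthis := hasSum_g_of_lt d c hzn
      rw [← hg _ hne] at hthis
      have hfun : (fun n : ℕ => ((Pc c (n : ℝ) : ℝ) : ℂ) * ((r : ℂ) * Complex.exp ((θ : ℂ) * Complex.I)) ^ n)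
          = fun n : ℕ => a n * Complex.exp ((((n : ℤ) : ℂ)) * (θ : ℂ) * Complex.I) := by
        funext n
        rw [haa, mul_pow, ← Complex.exp_nat_mul]
        push_cast
        simp only [mul_assoc]
      rw [hfun] at hthis
      exact hthis
    have hint : (∫ θ in (0 : ℝ)..(2 * Real.pi),
          ‖g ((r : ℂ) * Complex.exp ((θ : ℂ) * Complex.I))‖ ^ 2)
        = 2 * Real.pi * ∑' n : ℕ, ‖a n‖ ^ 2 :=
      parseval_aux a ha (fun n => (n : ℤ)) (fun n m h => Int.natCast_inj.mp h) _ hf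
    rw [hint, ← mul_assoc, one_div, inv_mul_cancel₀ hπ, one_mul]
    refine tsum_congr fun n => ?_
    rw [hanorm n, mul_pow, _root_.sq_abs, ← pow_mul, mul_comm n 2]
  · intro r hr1
    have hr0 : 0 < r := lt_trans one_pos hr1
    have hs0 : (0 : ℝ) ≤ r⁻¹ := by positivity
    have hs1 : r⁻¹ < 1 := by rw [inv_lt_one_iff₀]; right; exact hr1
    set a : ℕ → ℂ := fun n => -((Pc c (-((n : ℝ) + 1)) : ℝ) : ℂ) * ((r : ℂ)⁻¹) ^ (n + 1) with haa
    have hanorm : ∀ n, ‖a n‖ = |Pc c (-((n : ℝ) + 1))| * (r⁻¹) ^ (n + 1) := by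
      intro n
      rw [haa]
      rw [norm_mul, norm_neg, Complex.norm_real, Real.norm_eq_abs, norm_pow, norm_inv,
        Complex.norm_real, Real.norm_eq_abs, _root_.abs_of_pos hr0]
    have ha : Summable fun n => ‖a n‖ := by
      apply Summable.of_nonneg_of_le (fun n => norm_nonneg _)
        (fun n => ?_) (summable_majorant c hs0 hs1)
      calc ‖a n‖ = |Pc c (-((n : ℝ) + 1))| * (r⁻¹) ^ (n + 1) := hanorm n
        _ ≤ |Pc c (-((n : ℝ) + 1))| * (r⁻¹) ^ n := by
            apply mul_le_mul_of_nonneg_left _ (abs_nonneg _)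
            exact pow_le_pow_of_le_one hs0 hs1.le (Nat.le_succ n)
        _ ≤ (∑ k : Fin (d + 1), |c k| * (((n + (k : ℕ)).choose (k : ℕ) : ℝ))) * (r⁻¹) ^ n :=
            mul_le_mul_of_nonneg_right (abs_Pc_neg_le c n) (by positivity)
    have hf : ∀ θ : ℝ, HasSum (fun n : ℕ => a n * Complex.exp ((((-(n + 1) : ℤ) : ℂ)) * (θ : ℂ) * Complex.I))
        (g ((r : ℂ) * Complex.exp ((θ : ℂ) * Complex.I))) := by
      intro θ
      have hzn : 1 < ‖(r : ℂ) * Complex.exp ((θ : ℂ) * Complex.I)‖ := by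
        rw [hznorm r θ hr0]; exact hr1
      have hne : (r : ℂ) * Complex.exp ((θ : ℂ) * Complex.I) ≠ 1 := by
        intro h; rw [h] at hzn; simp at hzn
      have hthis := hasSum_g_of_gt d c hzn
      rw [← hg _ hne] at hthis
      have hfun : (fun n : ℕ => -((Pc c (-((n : ℝ) + 1)) : ℝ) : ℂ) * (((r : ℂ) * Complex.exp ((θ : ℂ) * Complex.I))⁻¹) ^ (n + 1))
          = fun n : ℕ => a n * Complex.exp ((((-(n + 1) : ℤ) : ℂ)) * (θ : ℂ) * Complex.I) := by
        funext n
        rw [haa, mul_inv, ← Complex.exp_neg, mul_pow, ← Complex.exp_nat_mul]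
        rw [show ((((-(n + 1) : ℤ)) : ℂ) * (θ : ℂ) * Complex.I) = ((n : ℂ) + 1) * -((θ : ℂ) * Complex.I) by push_cast; ring]
        push_cast
        ring
      rw [hfun] at hthis
      exact hthis
    have hint : (∫ θ in (0 : ℝ)..(2 * Real.pi),
          ‖g ((r : ℂ) * Complex.exp ((θ : ℂ) * Complex.I))‖ ^ 2)
        = 2 * Real.pi * ∑' n : ℕ, ‖a n‖ ^ 2 :=
      parseval_aux a ha (fun n => (-(n + 1) : ℤ)) (fun n m h => by simp only [neg_inj, add_left_inj, Int.natCast_inj] at h; exact h) _ hf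
    rw [hint, ← mul_assoc, one_div, inv_mul_cancel₀ hπ, one_mul]
    refine tsum_congr fun n => ?_
    rw [hanorm n, mul_pow, _root_.sq_abs, ← pow_mul, mul_comm (n + 1) 2, inv_pow, ← div_eq_mul_inv]
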